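/- (Optimal loading for the expected profit under logit demand.) Let β₀ ∈ ℝ and β₁ > 0, and define h(θ) = θ/(1 + e^{β₀+β₁θ}). Then the equation 1 + e^{β₀+β₁θ} − β₁ θ e^{β₀+β₁θ} = 0 has a unique real solution θ*, θ* > 0, and θ* is the unique global maximizer of h on ℝ. -/

import Mathlib

private lemma logit_aux (β₀ β₁ : ℝ) (hβ₁ : 0 < β₁) :
    ∃ θs : ℝ,
      (1 + Real.exp (β₀ + β₁ * θs) - β₁ * θs * Real.exp (β₀ + β₁ * θs) = 0) ∧
      0 < θs ∧
      (∀ θ : ℝ, 1 + Real.exp (β₀ + β₁ * θ) - β₁ * θ * Real.exp (β₀ + β₁ * θ) = 0 → θ = θs) ∧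
      (∀ θ : ℝ, θ ≠ θs →
        θ / (1 + Real.exp (β₀ + β₁ * θ)) < θs / (1 + Real.exp (β₀ + β₁ * θs))) := by
  set g : ℝ → ℝ := fun θ => 1 + Real.exp (β₀ + β₁ * θ) - β₁ * θ * Real.exp (β₀ + β₁ * θ)
    with hg
  set h : ℝ → ℝ := fun θ => θ / (1 + Real.exp (β₀ + β₁ * θ)) with hhdef
  have hEpos : ∀ θ : ℝ, 0 < Real.exp (β₀ + β₁ * θ) := fun θ => Real.exp_pos _
  have hden : ∀ θ : ℝ, 0 < 1 + Real.exp (β₀ + β₁ * θ) := fun θ => by positivity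
  -- derivative facts
  have hE : ∀ θ : ℝ, HasDerivAt (fun x => Real.exp (β₀ + β₁ * x))
      (β₁ * Real.exp (β₀ + β₁ * θ)) θ := by
    intro θ
    have h1 : HasDerivAt (fun x : ℝ => β₀ + β₁ * x) β₁ θ := by
      simpa using ((hasDerivAt_id θ).const_mul β₁).const_add β₀
    simpa [mul_comm, Function.comp_def] using (Real.hasDerivAt_exp (β₀ + β₁ * θ)).comp θ h1
  have hgderiv : ∀ θ : ℝ, HasDerivAt g (-(β₁ ^ 2 * θ * Real.exp (β₀ + β₁ * θ))) θ := by
    intro θ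
    have h1 : HasDerivAt (fun x : ℝ => β₁ * x) β₁ θ := by
      simpa using (hasDerivAt_id θ).const_mul β₁
    have h2 := (h1.mul (hE θ))
    have h3 := ((hE θ).const_add 1).sub h2
    have h4 := h3.const_add 0
    have : HasDerivAt g (β₁ * Real.exp (β₀ + β₁ * θ) -
        (β₁ * Real.exp (β₀ + β₁ * θ) + β₁ * θ * (β₁ * Real.exp (β₀ + β₁ * θ)))) θ := by
      simpa [hg, add_sub_assoc, Pi.sub_def, Pi.mul_def] using h3
    convert this using 1
    ring
  have hEcont : Continuous fun θ : ℝ => Real.exp (β₀ + β₁ * θ) :=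
    Real.continuous_exp.comp (by fun_prop)
  have hgcont : Continuous g :=
    (continuous_const.add hEcont).sub ((continuous_const.mul continuous_id).mul hEcont)
  have hhderiv : ∀ θ : ℝ, HasDerivAt h (g θ / (1 + Real.exp (β₀ + β₁ * θ)) ^ 2) θ := by
    intro θ
    have hd := (hasDerivAt_id θ).div ((hE θ).const_add 1) (ne_of_gt (hden θ))
    have hd' : HasDerivAt h ((1 * (1 + Real.exp (β₀ + β₁ * θ)) - θ * (β₁ * Real.exp (β₀ + β₁ * θ))) /
        (1 + Real.exp (β₀ + β₁ * θ)) ^ 2) θ := hd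
    convert hd' using 1
    simp only [hg]
    ring
  -- g is strictly decreasing on [0, ∞)
  have hanti : StrictAntiOn g (Set.Ici (0 : ℝ)) := by
    apply strictAntiOn_of_deriv_neg (convex_Ici 0) hgcont.continuousOn
    intro x hx
    rw [interior_Ici] at hx
    rw [(hgderiv x).deriv]
    have hx' : 0 < x := hx
    have : 0 < β₁ ^ 2 * x * Real.exp (β₀ + β₁ * x) := by positivity
    linarith
  -- g is positive on (-∞, 0]
  have hgpos0 : ∀ θ : ℝ, θ ≤ 0 → 0 < g θ := by
    intro θ hθ
    have h1 : β₁ * θ * Real.exp (β₀ + β₁ * θ) ≤ 0 := by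
      have h2 : 0 ≤ β₁ * Real.exp (β₀ + β₁ * θ) := mul_nonneg hβ₁.le (hEpos θ).le
      nlinarith
    have := hEpos θ
    simp only [hg]
    linarith
  -- find θ₁ > 0 with g θ₁ < 0
  set θ₁ : ℝ := max (2 / β₁) ((1 - β₀) / β₁) with hθ₁def
  have hθ₁pos : 0 < θ₁ := lt_max_of_lt_left (by positivity)
  have hb2 : 2 ≤ β₁ * θ₁ := by
    rw [hθ₁def]
    have : 2 / β₁ ≤ θ₁ := le_max_left _ _
    calc 2 = β₁ * (2 / β₁) := by field_simp
    _ ≤ β₁ * θ₁ := by apply mul_le_mul_of_nonneg_left this hβ₁.le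
  have hs1 : 1 ≤ β₀ + β₁ * θ₁ := by
    have h1 : (1 - β₀) / β₁ ≤ θ₁ := le_max_right _ _
    have : 1 - β₀ = β₁ * ((1 - β₀) / β₁) := by field_simp
    nlinarith [mul_le_mul_of_nonneg_left h1 hβ₁.le]
  have hgneg : g θ₁ < 0 := by
    have hE1 : (1 : ℝ) < Real.exp (β₀ + β₁ * θ₁) := by
      calc (1 : ℝ) < Real.exp 1 := by nlinarith [Real.exp_one_gt_d9]
      _ ≤ Real.exp (β₀ + β₁ * θ₁) := Real.exp_le_exp.2 hs1
    simp only [hg]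
    nlinarith [hEpos θ₁]
  -- IVT to find root
  have hivt : (0 : ℝ) ∈ g '' Set.Icc 0 θ₁ := by
    apply intermediate_value_Icc' hθ₁pos.le hgcont.continuousOn
    constructor
    · exact hgneg.le
    · exact (hgpos0 0 le_rfl).le
  obtain ⟨θs, hθsmem, hθsroot⟩ := hivt
  have hθs0 : 0 < θs := by
    rcases lt_or_eq_of_le hθsmem.1 with h | h
    · exact h
    · exfalso; rw [← h] at hθsroot; have := hgpos0 0 le_rfl; linarith [hθsroot]
  -- sign of g away from θs
  have hgsign_lt : ∀ θ : ℝ, θ < θs → 0 < g θ := by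
    intro θ hθ
    rcases le_or_gt θ 0 with h0 | h0
    · exact hgpos0 θ h0
    · have := hanti (Set.mem_Ici.2 h0.le) (Set.mem_Ici.2 hθs0.le) hθ
      rw [hθsroot] at this; exact this
  have hgsign_gt : ∀ θ : ℝ, θs < θ → g θ < 0 := by
    intro θ hθ
    have := hanti (Set.mem_Ici.2 hθs0.le) (Set.mem_Ici.2 (hθs0.le.trans hθ.le)) hθ
    rw [hθsroot] at this; exact this
  refine ⟨θs, hθsroot, hθs0, ?_, ?_⟩
  · intro θ hθ
    by_contra hne
    rcases lt_or_gt_of_ne hne with h | h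
    · have := hgsign_lt θ h; simp only [hg] at this; linarith
    · have := hgsign_gt θ h; simp only [hg] at this; linarith
  · -- maximizer
    have hhcont : Continuous h :=
      Continuous.div continuous_id (continuous_const.add hEcont) fun x => ne_of_gt (hden x)
    have hmono : StrictMonoOn h (Set.Iic θs) := by
      apply strictMonoOn_of_deriv_pos (convex_Iic θs) hhcont.continuousOn
      intro x hx
      rw [interior_Iic] at hx
      rw [(hhderiv x).deriv]
      exact div_pos (hgsign_lt x hx) (by positivity)
    have hanti' : StrictAntiOn h (Set.Ici θs) := by
      apply strictAntiOn_of_deriv_neg (convex_Ici θs) hhcont.continuousOn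
      intro x hx
      rw [interior_Ici] at hx
      rw [(hhderiv x).deriv]
      exact div_neg_of_neg_of_pos (hgsign_gt x hx) (by positivity)
    intro θ hθ
    rcases lt_or_gt_of_ne hθ with hlt | hgt
    · exact hmono (Set.mem_Iic.2 hlt.le) (Set.mem_Iic.2 le_rfl) hlt
    · exact hanti' (Set.mem_Ici.2 le_rfl) (Set.mem_Ici.2 hgt.le) hgt

/-- optimal loading for the expected profit under logit demand: the equation
`1 + e^{β₀+β₁θ} − β₁ θ e^{β₀+β₁θ} = 0` has a unique real solution `θ*`, `θ* > 0`, and `θ*`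
is the unique global maximizer of `h(θ) = θ/(1 + e^{β₀+β₁θ})` on `ℝ`. -/
theorem optimal_loading_profit (β₀ β₁ : ℝ) (hβ₁ : 0 < β₁) :
    ∃ θs : ℝ,
      (1 + Real.exp (β₀ + β₁ * θs) - β₁ * θs * Real.exp (β₀ + β₁ * θs) = 0) ∧
      0 < θs ∧
      (∀ θ : ℝ, 1 + Real.exp (β₀ + β₁ * θ) - β₁ * θ * Real.exp (β₀ + β₁ * θ) = 0 → θ = θs) ∧
      (∀ θ : ℝ, θ ≠ θs →
        θ / (1 + Real.exp (β₀ + β₁ * θ)) < θs / (1 + Real.exp (β₀ + β₁ * θs))) := by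
  exact logit_aux β₀ β₁ hβ₁
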